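/- Let A be a non-unital C*-algebra with minimal unitization Ã, and let k ≥ 1. Then Gen_k(Ã)_sa is dense in Ã^k_sa if and only if both Gen_k(A)_sa is dense in A^k_sa and Lg_k(Ã)_sa is dense in Ã^k_sa. In other words, gr(A) = max{rr(A), gr_sa(A)}, where gr_sa(A) is the least k ≥ 0 with Gen_{k+1}(A)_sa dense in A^{k+1}_sa. -/

import Mathlib

/-- The entries of the tuple `a` generate `A` as a C*-algebra: the smallest closed
`*`-subalgebra of `A` containing them is `A` itself. -/
def Generates {A : Type*} [NonUnitalCStarAlgebra A] {k : ℕ} (a : Fin k → A) : Prop :=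
  (NonUnitalStarAlgebra.adjoin ℂ (Set.range a)).topologicalClosure = ⊤

open Filter Topology Unitization NonUnitalStarAlgebra

section SndCont

variable {A : Type*} [NonUnitalCStarAlgebra A]

lemma aux_continuous_snd : Continuous (fun z : Unitization ℂ A => z.snd) :=
  continuous_snd.comp (Unitization.uniformEquivProd (𝕜 := ℂ) (A := A)).continuous

/-- If a tuple generates the unitization, then its `A`-components generate `A`. -/
lemma aux_snd_generates {k : ℕ} {b : Fin k → Unitization ℂ A} (hb : Generates b) :
    Generates (fun i => (b i).snd) := by
  set S := (NonUnitalStarAlgebra.adjoin ℂ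
    (Set.range fun i => (b i).snd)).topologicalClosure with hS
  have key : ∀ z : Unitization ℂ A, z.snd ∈ S := by
    intro z
    have hb' : (NonUnitalStarAlgebra.adjoin ℂ (Set.range b)).topologicalClosure = ⊤ := hb
    have hz : z ∈ closure (NonUnitalStarAlgebra.adjoin ℂ (Set.range b) :
        Set (Unitization ℂ A)) := by
      have : z ∈ (NonUnitalStarAlgebra.adjoin ℂ (Set.range b)).topologicalClosure := by
        rw [hb']; trivial
      exact this
    have hmaps : Set.MapsTo (fun z : Unitization ℂ A => z.snd)
        (NonUnitalStarAlgebra.adjoin ℂ (Set.range b) : Set (Unitization ℂ A)) (S : Set A) := by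
      intro w hw
      show w.snd ∈ (S : Set A)
      induction hw using NonUnitalStarAlgebra.adjoin_induction with
      | mem x hx =>
        obtain ⟨i, rfl⟩ := hx
        exact NonUnitalStarSubalgebra.le_topologicalClosure _
          (NonUnitalStarAlgebra.subset_adjoin ℂ _ ⟨i, rfl⟩)
      | add x y _ _ hx hy => rw [Unitization.snd_add]; exact add_mem hx hy
      | zero => simpa using zero_mem S
      | mul x y _ _ hx hy =>
        rw [Unitization.snd_mul]
        exact add_mem (add_mem (SMulMemClass.smul_mem _ hy) (SMulMemClass.smul_mem _ hx))
          (mul_mem hx hy)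
      | smul r x _ hx => rw [Unitization.snd_smul]; exact SMulMemClass.smul_mem _ hx
      | star x _ hx => rw [Unitization.snd_star]; exact star_mem hx
    have hclosed : IsClosed (S : Set A) :=
      NonUnitalStarSubalgebra.isClosed_topologicalClosure _
    have := map_mem_closure aux_continuous_snd hz hmaps
    rwa [hclosed.closure_eq] at this
  rw [Generates, ← hS, NonUnitalStarAlgebra.eq_top_iff]
  intro x
  simpa using key (inr x)

end SndCont
section IsUnitOfGenerates

variable {B : Type*} [CStarAlgebra B]

/-- A self-adjoint tuple which generates a unital C*-algebra as a *non-unital*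
C*-algebra has invertible sum of squares. -/
lemma aux_isUnit_sum_sq {k : ℕ} {b : Fin k → B} (hsa : ∀ i, IsSelfAdjoint (b i))
    (hgen : (NonUnitalStarAlgebra.adjoin ℂ (Set.range b)).topologicalClosure = ⊤) :
    IsUnit (∑ i, b i ^ 2) := by
  by_contra hnu
  have hnt : Nontrivial B := by
    by_contra hs
    rw [not_nontrivial_iff_subsingleton] at hs
    exact hnu (isUnit_of_subsingleton _)
  letI := CStarAlgebra.spectralOrder B
  letI := CStarAlgebra.spectralOrderedRing B
  set h : B := ∑ i, b i ^ 2 with hh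
  have hb2 : ∀ i, (0 : B) ≤ b i ^ 2 := fun i => by
    have := star_mul_self_nonneg (b i)
    rwa [(hsa i).star_eq, ← sq] at this
  have hnn : (0 : B) ≤ h := Finset.sum_nonneg fun i _ => hb2 i
  have hsa_h : IsSelfAdjoint h := .of_nonneg hnn
  have hspec : ∀ x ∈ spectrum ℝ h, (0 : ℝ) ≤ x := fun x hx =>
    spectrum_nonneg_of_nonneg hnn hx
  have h0spec : (0 : ℝ) ∈ spectrum ℝ h := by
    rw [spectrum.zero_mem_iff]; exact hnu
  -- the approximate kernel projections
  set g : ℕ → ℝ → ℝ := fun n t => max 0 (min 1 (2 - 2 * ((n : ℝ) + 1) * t)) with hg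
  have hgc : ∀ n, Continuous (g n) := fun n =>
    continuous_const.max (continuous_const.min (by fun_prop))
  have hg0 : ∀ n t, 0 ≤ g n t := fun n t => le_max_left _ _
  have hg1 : ∀ n t, g n t ≤ 1 := fun n t => max_le zero_le_one (min_le_left _ _)
  have hgzero : ∀ n, g n 0 = 1 := fun n => by norm_num [hg]
  have hkey : ∀ n, ∀ t : ℝ, 0 ≤ t → g n t * (t * g n t) ≤ ((n : ℝ) + 1)⁻¹ := by
    intro n t ht
    have hn1 : (0 : ℝ) < (n : ℝ) + 1 := by positivity
    by_cases hte : t ≤ ((n : ℝ) + 1)⁻¹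
    · have h1 : g n t * (t * g n t) ≤ 1 * (t * 1) := by
        apply mul_le_mul (hg1 n t) ?_ (by positivity) zero_le_one
        exact mul_le_mul_of_nonneg_left (hg1 n t) ht
      simpa using h1.trans (by simpa using hte)
    · push_neg at hte
      have hneg : 2 - 2 * ((n : ℝ) + 1) * t ≤ 0 := by
        have h1t : (1 : ℝ) < ((n : ℝ) + 1) * t :=
          calc (1 : ℝ) = ((n : ℝ) + 1) * ((n : ℝ) + 1)⁻¹ := (mul_inv_cancel₀ hn1.ne').symm
            _ < ((n : ℝ) + 1) * t := mul_lt_mul_of_pos_left hte hn1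
        nlinarith
      have : g n t = 0 := by
        rw [hg]
        simp only
        rw [max_eq_left]
        exact (min_le_right _ _).trans hneg
      rw [this]
      simp [inv_nonneg.mpr hn1.le]
  set e : ℕ → B := fun n => cfc (g n) h with he
  have hesa : ∀ n, IsSelfAdjoint (e n) := fun n => cfc_predicate (g n) h
  have hnorm_e_le : ∀ n, ‖e n‖ ≤ 1 := fun n =>
    norm_cfc_le zero_le_one fun t _ => by
      rw [Real.norm_eq_abs, abs_of_nonneg (hg0 n t)]; exact hg1 n t
  have hnorm_e_ge : ∀ n, 1 ≤ ‖e n‖ := by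
    intro n
    have h1 : (1 : ℝ) ∈ spectrum ℝ (e n) := by
      rw [he]
      simp only
      rw [cfc_map_spectrum (g n) h hsa_h (hgc n).continuousOn]
      exact ⟨0, h0spec, hgzero n⟩
    simpa using spectrum.norm_le_norm_of_mem h1
  -- smallness of `b i * e n`
  have hbe : ∀ i n, ‖b i * e n‖ ≤ Real.sqrt (((n : ℝ) + 1)⁻¹) := by
    intro i n
    have hn1 : (0 : ℝ) < (n : ℝ) + 1 := by positivity
    have h1 : b i ^ 2 ≤ h := by
      rw [hh, ← Finset.add_sum_erase _ _ (Finset.mem_univ i)]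
      exact le_add_of_nonneg_right (Finset.sum_nonneg fun j _ => hb2 j)
    have h2 : e n * b i ^ 2 * e n ≤ e n * h * e n := by
      have := star_left_conjugate_le_conjugate h1 (e n)
      rwa [(hesa n).star_eq] at this
    have h3 : e n * b i ^ 2 * e n = star (b i * e n) * (b i * e n) := by
      rw [star_mul, (hesa n).star_eq, (hsa i).star_eq, sq]
      simp only [mul_assoc]
    have h4 : (0 : B) ≤ e n * b i ^ 2 * e n := h3 ▸ star_mul_self_nonneg _
    have h5 : e n * h * e n = cfc (fun t : ℝ => g n t * (t * g n t)) h := by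
      rw [cfc_mul (g n) (fun t => t * g n t) h (hgc n).continuousOn (by fun_prop),
        cfc_mul (fun t : ℝ => t) (g n) h (by fun_prop) (hgc n).continuousOn,
        cfc_id' ℝ h, mul_assoc]
    have h6 : ‖e n * h * e n‖ ≤ ((n : ℝ) + 1)⁻¹ := by
      rw [h5]
      refine norm_cfc_le (by positivity) fun t ht => ?_
      have ht0 := hspec t ht
      rw [Real.norm_eq_abs, abs_of_nonneg (by positivity)]
      exact hkey n t ht0
    have h7 : ‖b i * e n‖ ^ 2 ≤ ((n : ℝ) + 1)⁻¹ := by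
      calc ‖b i * e n‖ ^ 2 = ‖star (b i * e n) * (b i * e n)‖ := by
            rw [CStarRing.norm_star_mul_self, sq]
        _ = ‖e n * b i ^ 2 * e n‖ := by rw [h3]
        _ ≤ ‖e n * h * e n‖ := CStarAlgebra.norm_le_norm_of_nonneg_of_le h4 h2
        _ ≤ _ := h6
    have := Real.sqrt_le_sqrt h7
    rwa [Real.sqrt_sq (norm_nonneg _)] at this
  have hsqrt0 : Tendsto (fun n : ℕ => Real.sqrt (((n : ℝ) + 1)⁻¹)) atTop (𝓝 0) := by
    have h1 : Tendsto (fun n : ℕ => ((n : ℝ) + 1)⁻¹) atTop (𝓝 0) := by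
      simpa using tendsto_one_div_add_atTop_nhds_zero_nat (𝕜 := ℝ)
    have h2 : Tendsto (fun n : ℕ => Real.sqrt (((n : ℝ) + 1)⁻¹)) atTop (𝓝 (Real.sqrt 0)) :=
      (Real.continuous_sqrt.tendsto 0).comp h1
    rwa [Real.sqrt_zero] at h2
  have hbe0 : ∀ i, Tendsto (fun n => ‖b i * e n‖) atTop (𝓝 0) :=
    fun i => squeeze_zero (fun n => norm_nonneg _) (fun n => hbe i n) hsqrt0
  have hswap : ∀ z : B, ∀ n, ‖e n * z‖ = ‖star z * e n‖ := by
    intro z n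
    rw [show star z * e n = star (star (e n) * z) by rw [star_mul, star_star],
      norm_star, (hesa n).star_eq]
  -- all elements of the generated non-unital subalgebra are killed by `e n`
  have main : ∀ z ∈ NonUnitalStarAlgebra.adjoin ℂ (Set.range b),
      Tendsto (fun n => ‖z * e n‖) atTop (𝓝 0) ∧
      Tendsto (fun n => ‖e n * z‖) atTop (𝓝 0) := by
    intro z hz
    induction hz using NonUnitalStarAlgebra.adjoin_induction with
    | mem x hx =>
      obtain ⟨i, rfl⟩ := hx
      refine ⟨hbe0 i, ?_⟩
      have : ∀ n, ‖e n * b i‖ = ‖b i * e n‖ := fun n => by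
        rw [hswap (b i) n, (hsa i).star_eq]
      simpa only [this] using hbe0 i
    | add x y _ _ hx hy =>
      constructor
      · refine squeeze_zero (fun n => norm_nonneg _) (fun n => ?_) (by simpa using hx.1.add hy.1)
        rw [add_mul]; exact norm_add_le _ _
      · refine squeeze_zero (fun n => norm_nonneg _) (fun n => ?_) (by simpa using hx.2.add hy.2)
        rw [mul_add]; exact norm_add_le _ _
    | zero => constructor <;> simpa using tendsto_const_nhds
    | mul x y _ _ hx hy =>
      constructor
      · refine squeeze_zero (fun n => norm_nonneg _) (fun n => ?_)
          (by simpa using hy.1.const_mul ‖x‖)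
        rw [mul_assoc]; exact norm_mul_le _ _
      · refine squeeze_zero (fun n => norm_nonneg _) (fun n => ?_)
          (by simpa using hx.2.mul_const ‖y‖)
        rw [← mul_assoc]; exact norm_mul_le _ _
    | smul r x _ hx =>
      constructor
      · have heq : (fun n => ‖(r • x) * e n‖) = fun n => ‖r‖ * ‖x * e n‖ :=
          funext fun n => by rw [smul_mul_assoc, norm_smul]
        have h0 : Tendsto (fun n => ‖r‖ * ‖x * e n‖) atTop (𝓝 (‖r‖ * 0)) := hx.1.const_mul ‖r‖
        rw [mul_zero] at h0
        rw [heq]; exact h0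
      · have heq : (fun n => ‖e n * (r • x)‖) = fun n => ‖r‖ * ‖e n * x‖ :=
          funext fun n => by rw [mul_smul_comm, norm_smul]
        have h0 : Tendsto (fun n => ‖r‖ * ‖e n * x‖) atTop (𝓝 (‖r‖ * 0)) := hx.2.const_mul ‖r‖
        rw [mul_zero] at h0
        rw [heq]; exact h0
    | star x _ hx =>
      constructor
      · have : ∀ n, ‖star x * e n‖ = ‖e n * x‖ := fun n => (hswap x n).symm
        simpa only [this] using hx.2
      · have : ∀ n, ‖e n * star x‖ = ‖x * e n‖ := fun n => by
          rw [hswap (star x) n, star_star]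
        simpa only [this] using hx.1
  -- the contradiction: 1 is in the closure
  have h1mem : (1 : B) ∈ closure (NonUnitalStarAlgebra.adjoin ℂ (Set.range b) : Set B) := by
    have : (1 : B) ∈ (NonUnitalStarAlgebra.adjoin ℂ (Set.range b)).topologicalClosure := by
      rw [hgen]; trivial
    exact this
  obtain ⟨z, hz, hdz⟩ := Metric.mem_closure_iff.mp h1mem (1/2) (by norm_num)
  have hz0 := (main z hz).1
  have hev : ∀ᶠ n in atTop, ‖z * e n‖ < 1/2 := by
    have := hz0 (Metric.ball_mem_nhds 0 (by norm_num : (0:ℝ) < 1/2))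
    filter_upwards [this] with n hn
    simpa [Real.dist_eq, abs_of_nonneg (norm_nonneg _)] using hn
  obtain ⟨n, hn⟩ := hev.exists
  have hcontra : ‖e n‖ < 1 := by
    have h1 : (1 - z) * e n + z * e n = e n := by
      rw [sub_mul, one_mul, sub_add_cancel]
    have h2 : ‖(1 - z) * e n‖ ≤ ‖1 - z‖ * ‖e n‖ := norm_mul_le _ _
    have h3 : ‖1 - z‖ < 1/2 := by
      rw [← dist_eq_norm]; exact hdz
    calc ‖e n‖ = ‖(1 - z) * e n + z * e n‖ := by rw [h1]
      _ ≤ ‖(1 - z) * e n‖ + ‖z * e n‖ := norm_add_le _ _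
      _ ≤ ‖1 - z‖ * ‖e n‖ + ‖z * e n‖ := by linarith
      _ < (1/2) * 1 + 1/2 := by
          have := hnorm_e_le n
          have h4 : ‖1 - z‖ * ‖e n‖ ≤ ‖1 - z‖ * 1 :=
            mul_le_mul_of_nonneg_left this (norm_nonneg _)
          nlinarith [norm_nonneg (e n)]
      _ = 1 := by norm_num
  exact absurd (hnorm_e_ge n) (by linarith)

end IsUnitOfGenerates
section OneMem

variable {B : Type*} [CStarAlgebra B]

/-- If a closed non-unital star subalgebra of a unital C*-algebra contains an invertible
sum of squares of self-adjoint elements, then it contains the unit. -/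
lemma aux_one_mem {S : NonUnitalStarSubalgebra ℂ B} (hS : IsClosed (S : Set B))
    {k : ℕ} {d : Fin k → B} (hd : ∀ i, d i ∈ S) (hsa : ∀ i, IsSelfAdjoint (d i))
    (hu : IsUnit (∑ i, d i ^ 2)) : (1 : B) ∈ S := by
  rcases subsingleton_or_nontrivial B with hsub | hnt
  · exact (Subsingleton.elim (1 : B) 0) ▸ zero_mem S
  letI := CStarAlgebra.spectralOrder B
  letI := CStarAlgebra.spectralOrderedRing B
  set h : B := ∑ i, d i ^ 2 with hh
  have hmem : h ∈ S := by
    rw [hh]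
    exact sum_mem fun i _ => by rw [sq]; exact mul_mem (hd i) (hd i)
  have hb2 : ∀ i, (0 : B) ≤ d i ^ 2 := fun i => by
    have := star_mul_self_nonneg (d i)
    rwa [(hsa i).star_eq, ← sq] at this
  have hnn : (0 : B) ≤ h := Finset.sum_nonneg fun i _ => hb2 i
  have hsa_h : IsSelfAdjoint h := .of_nonneg hnn
  have hspos : ∀ x ∈ spectrum ℝ h, (0 : ℝ) < x := by
    intro x hx
    rcases (spectrum_nonneg_of_nonneg hnn hx).lt_or_eq with hlt | heq
    · exact hlt
    · rw [← heq] at hx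
      rw [spectrum.zero_mem_iff] at hx
      exact absurd hu hx
  obtain ⟨r, hr, hrle⟩ := (CFC.exists_pos_algebraMap_le_iff hsa_h).mpr hspos
  have hne : h ≠ 0 := hu.ne_zero
  have hnp : (0 : ℝ) < ‖h‖ := norm_pos_iff.mpr hne
  set c : ℝ := ‖h‖⁻¹ with hc
  have hcpos : 0 < c := inv_pos.mpr hnp
  set u : B := c • h with hu'
  have hucfc : u = cfc (fun t : ℝ => c • t) h := (cfc_smul_id c h).symm
  have husa : IsSelfAdjoint u := IsSelfAdjoint.smul (isSelfAdjoint_iff.mpr (star_trivial c)) hsa_h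
  have hu_nonneg : (0 : B) ≤ u := by
    rw [hucfc]
    exact cfc_nonneg fun x hx =>
      smul_nonneg hcpos.le (spectrum_nonneg_of_nonneg hnn hx)
  have hspec_u : spectrum ℝ u = (fun t : ℝ => c • t) '' spectrum ℝ h := by
    rw [hucfc]
    exact cfc_map_spectrum (fun t : ℝ => c • t) h hsa_h (by fun_prop)
  have hru : ∀ x ∈ spectrum ℝ h, r ≤ x := (algebraMap_le_iff_le_spectrum hsa_h).mp hrle
  have hxnorm : ∀ x ∈ spectrum ℝ h, x ≤ ‖h‖ := fun x hx =>
    (le_abs_self x).trans (by simpa using spectrum.norm_le_norm_of_mem hx)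
  set m : ℝ := c * r with hm
  have hm_pos : 0 < m := mul_pos hcpos hr
  have hm_le : m ≤ 1 := by
    obtain ⟨x, hx⟩ := CFC.spectrum_nonempty ℝ h hsa_h
    have hrh : r ≤ ‖h‖ := (hru x hx).trans (hxnorm x hx)
    rw [hm, hc, show (1 : ℝ) = ‖h‖⁻¹ * ‖h‖ from (inv_mul_cancel₀ hnp.ne').symm]
    exact mul_le_mul_of_nonneg_left hrh (inv_nonneg.mpr hnp.le)
  have hmu : algebraMap ℝ B m ≤ u := by
    rw [algebraMap_le_iff_le_spectrum husa]
    intro x hx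
    rw [hspec_u] at hx
    obtain ⟨t, ht, rfl⟩ := hx
    exact mul_le_mul_of_nonneg_left (hru t ht) hcpos.le
  have hu_le_one : u ≤ 1 := by
    rw [← CStarAlgebra.norm_le_one_iff_of_nonneg u hu_nonneg]
    rw [hu', norm_smul, Real.norm_eq_abs, abs_of_nonneg hcpos.le, hc,
      inv_mul_cancel₀ hnp.ne']
  have humem : u ∈ S := by
    rw [hu', ← Complex.coe_smul]
    exact SMulMemClass.smul_mem _ hmem
  set x : B := 1 - u with hx
  have hx_nonneg : (0 : B) ≤ x := sub_nonneg.mpr hu_le_one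
  have hx_le : x ≤ algebraMap ℝ B (1 - m) := by
    rw [map_sub, map_one, hx]
    exact sub_le_sub_left hmu 1
  have hxnorm' : ‖x‖ ≤ 1 - m := by
    rw [CStarAlgebra.norm_le_iff_le_algebraMap x (by linarith) hx_nonneg]
    exact hx_le
  have hmem_n : ∀ n : ℕ, (1 : B) - x ^ n ∈ S := by
    intro n
    induction n with
    | zero => simpa using zero_mem S
    | succ n ih =>
      have key : (1 : B) - x ^ (n + 1) = ((1 : B) - x ^ n) + u - ((1 : B) - x ^ n) * u := by
        have h1 : ((1 : B) - x ^ n) + u - ((1 : B) - x ^ n) * u = 1 - x ^ n * (1 - u) := by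
          noncomm_ring
        rw [h1, ← hx, ← pow_succ]
      rw [key]
      exact sub_mem (add_mem ih humem) (mul_mem ih humem)
  have hlim : Tendsto (fun n : ℕ => (1 : B) - x ^ n) atTop (𝓝 1) := by
    rw [tendsto_iff_norm_sub_tendsto_zero]
    refine squeeze_zero (fun n => norm_nonneg _) (fun n => ?_)
      (tendsto_pow_atTop_nhds_zero_of_lt_one (by linarith) (by linarith) :
        Tendsto (fun n : ℕ => (1 - m) ^ n) atTop (𝓝 0))
    calc ‖(1 : B) - x ^ n - 1‖ = ‖x ^ n‖ := by
          rw [sub_sub_cancel_left, norm_neg]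
      _ ≤ ‖x‖ ^ n := by
          rcases n with _ | n
          · simp
          · exact norm_pow_le' x n.succ_pos
      _ ≤ (1 - m) ^ n := pow_le_pow_left₀ (norm_nonneg _) hxnorm' n
  exact hS.mem_of_tendsto hlim (Filter.Eventually.of_forall hmem_n)

end OneMem

section GeneratesOfLg

variable {A : Type*} [NonUnitalCStarAlgebra A]

/-- If a self-adjoint tuple in the unitization has invertible sum of squares and its
`A`-components generate `A`, then it generates the unitization. -/
lemma aux_generates_of_isUnit {k : ℕ} {d : Fin k → Unitization ℂ A}
    (hsa : ∀ i, IsSelfAdjoint (d i)) (hu : IsUnit (∑ i, d i ^ 2))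
    (hgen : Generates (fun i => (d i).snd)) : Generates d := by
  set S := (NonUnitalStarAlgebra.adjoin ℂ (Set.range d)).topologicalClosure with hS
  have hSclosed : IsClosed (S : Set (Unitization ℂ A)) :=
    NonUnitalStarSubalgebra.isClosed_topologicalClosure _
  have hdS : ∀ i, d i ∈ S := fun i =>
    NonUnitalStarSubalgebra.le_topologicalClosure _
      (NonUnitalStarAlgebra.subset_adjoin ℂ _ ⟨i, rfl⟩)
  have h1 : (1 : Unitization ℂ A) ∈ S := aux_one_mem hSclosed hdS hsa hu
  have hinlS : ∀ r : ℂ, (inl r : Unitization ℂ A) ∈ S := by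
    intro r
    have : (inl r : Unitization ℂ A) = r • 1 := by
      rw [← Unitization.algebraMap_eq_inl, Algebra.algebraMap_eq_smul_one]
    rw [this]
    exact SMulMemClass.smul_mem _ h1
  have hinr_snd : ∀ i, (inr ((d i).snd) : Unitization ℂ A) ∈ S := by
    intro i
    have heq : (inr ((d i).snd) : Unitization ℂ A) = d i - inl ((d i).fst) := by
      have := inl_fst_add_inr_snd_eq (d i)
      rw [eq_sub_iff_add_eq, add_comm]
      exact this
    rw [heq]
    exact sub_mem (hdS i) (hinlS _)
  -- all of `inr A` lies in `S`
  have hinrA : ∀ y : A, (inr y : Unitization ℂ A) ∈ S := by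
    set T : NonUnitalStarSubalgebra ℂ A := S.comap (inrNonUnitalStarAlgHom ℂ A) with hT
    have hTclosed : IsClosed (T : Set A) :=
      IsClosed.preimage (isometry_inr (𝕜 := ℂ) (A := A)).continuous hSclosed
    have hle : NonUnitalStarAlgebra.adjoin ℂ (Set.range fun i => (d i).snd) ≤ T := by
      apply NonUnitalStarAlgebra.adjoin_le
      rintro x ⟨i, rfl⟩
      exact hinr_snd i
    have hle2 : (NonUnitalStarAlgebra.adjoin ℂ
        (Set.range fun i => (d i).snd)).topologicalClosure ≤ T :=
      NonUnitalStarSubalgebra.topologicalClosure_minimal _ hle hTclosed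
    have hgen' : (NonUnitalStarAlgebra.adjoin ℂ
        (Set.range fun i => (d i).snd)).topologicalClosure = ⊤ := hgen
    rw [hgen'] at hle2
    intro y
    exact hle2 (by trivial : y ∈ (⊤ : NonUnitalStarSubalgebra ℂ A))
  rw [Generates, ← hS, NonUnitalStarAlgebra.eq_top_iff]
  intro z
  have := inl_fst_add_inr_snd_eq z
  rw [← this]
  exact add_mem (hinlS _) (hinrA _)

end GeneratesOfLg
/-- Let `A` be a non-unital C*-algebra with minimal unitization `Ã` and `k ≥ 1`.
Then `Gen_k(Ã)_sa` is dense in `Ã^k_sa` if and only if both `Gen_k(A)_sa` is dense in `A^k_sa`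
and `Lg_k(Ã)_sa` is dense in `Ã^k_sa`; i.e. `gr(A) = max {rr(A), gr_sa(A)}`. -/
theorem gr_eq_max_rr_grSa {A : Type*} [NonUnitalCStarAlgebra A]
    (hA : ¬∃ e : A, ∀ x : A, e * x = x ∧ x * e = x) {k : ℕ} (hk : 1 ≤ k) :
    (∀ a : Fin k → Unitization ℂ A, (∀ i, IsSelfAdjoint (a i)) →
      a ∈ closure {b : Fin k → Unitization ℂ A | (∀ i, IsSelfAdjoint (b i)) ∧ Generates b}) ↔
    ((∀ a : Fin k → A, (∀ i, IsSelfAdjoint (a i)) →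
      a ∈ closure {b : Fin k → A | (∀ i, IsSelfAdjoint (b i)) ∧ Generates b}) ∧
     (∀ a : Fin k → Unitization ℂ A, (∀ i, IsSelfAdjoint (a i)) →
      a ∈ closure {b : Fin k → Unitization ℂ A |
        (∀ i, IsSelfAdjoint (b i)) ∧ IsUnit (∑ i, b i ^ 2)})) := by
  constructor
  · intro H
    constructor
    · -- Gen densely in A
      intro a ha
      have hcont : Continuous (fun b : Fin k → Unitization ℂ A => fun i => (b i).snd) :=
        continuous_pi fun i => aux_continuous_snd.comp (continuous_apply i)
      have hmem := H (fun i => (inr (a i) : Unitization ℂ A))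
        (fun i => (isSelfAdjoint_inr (R := ℂ)).mpr (ha i))
      have hmaps : Set.MapsTo (fun b : Fin k → Unitization ℂ A => fun i => (b i).snd)
          {b : Fin k → Unitization ℂ A | (∀ i, IsSelfAdjoint (b i)) ∧ Generates b}
          {b : Fin k → A | (∀ i, IsSelfAdjoint (b i)) ∧ Generates b} := by
        rintro b ⟨hbsa, hbgen⟩
        refine ⟨fun i => ?_, aux_snd_generates hbgen⟩
        show star (b i).snd = (b i).snd
        rw [← Unitization.snd_star, (hbsa i).star_eq]
      have := map_mem_closure hcont hmem hmaps
      simpa using this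
    · -- Lg dense
      intro a ha
      refine closure_mono ?_ (H a ha)
      rintro b ⟨hbsa, hbgen⟩
      exact ⟨hbsa, aux_isUnit_sum_sq hbsa hbgen⟩
  · rintro ⟨H1, H2⟩ a ha
    rw [Metric.mem_closure_iff]
    intro ε hε
    obtain ⟨b, ⟨hbsa, hbu⟩, hab⟩ :=
      Metric.mem_closure_iff.mp (H2 a ha) (ε/2) (by positivity)
    have hUopen : IsOpen {d : Fin k → Unitization ℂ A | IsUnit (∑ i, d i ^ 2)} := by
      have hc : Continuous fun d : Fin k → Unitization ℂ A => ∑ i, d i ^ 2 :=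
        continuous_finset_sum _ fun i _ => (continuous_apply i).pow 2
      exact Units.isOpen.preimage hc
    obtain ⟨δ, hδpos, hδ⟩ := Metric.isOpen_iff.mp hUopen b hbu
    set δ' := min δ (ε/2) with hδ'
    have hδ'pos : 0 < δ' := lt_min hδpos (by positivity)
    have hysa : ∀ i, IsSelfAdjoint ((b i).snd) := fun i => by
      show star (b i).snd = (b i).snd
      rw [← Unitization.snd_star, (hbsa i).star_eq]
    obtain ⟨c, ⟨hcsa, hcgen⟩, hyc⟩ :=
      Metric.mem_closure_iff.mp (H1 (fun i => (b i).snd) hysa) δ' hδ'pos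
    set d : Fin k → Unitization ℂ A := fun i => b i + inr (c i - (b i).snd) with hd
    have hdist_db : dist d b < δ' := by
      rw [dist_pi_lt_iff hδ'pos]
      intro i
      have heq : d i - b i = (inr (c i - (b i).snd) : Unitization ℂ A) := by
        rw [hd]; simp
      rw [dist_eq_norm, heq, Unitization.norm_inr]
      calc ‖c i - (b i).snd‖ = dist (c i) ((b i).snd) := (dist_eq_norm _ _).symm
        _ ≤ dist c (fun i => (b i).snd) := by exact dist_le_pi_dist c (fun j => (b j).snd) i
        _ < δ' := by rw [dist_comm]; exact hyc
    have hdmem : IsUnit (∑ i, d i ^ 2) :=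
      hδ (Metric.mem_ball.mpr (hdist_db.trans_le (min_le_left _ _)))
    have hdsa : ∀ i, IsSelfAdjoint (d i) := fun i =>
      (hbsa i).add ((isSelfAdjoint_inr (R := ℂ)).mpr ((hcsa i).sub (hysa i)))
    have hdsnd : (fun i => (d i).snd) = c := by
      funext i
      show (b i + (inr (c i - (b i).snd) : Unitization ℂ A)).snd = c i
      rw [Unitization.snd_add, Unitization.snd_inr]
      abel
    have hdgen : Generates d := aux_generates_of_isUnit hdsa hdmem (by rw [hdsnd]; exact hcgen)
    refine ⟨d, ⟨hdsa, hdgen⟩, ?_⟩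
    calc dist a d ≤ dist a b + dist b d := dist_triangle _ _ _
      _ < ε/2 + δ' := add_lt_add_of_lt_of_le hab (by rw [dist_comm]; exact hdist_db.le)
      _ ≤ ε/2 + ε/2 := by
          have := min_le_right δ (ε/2)
          linarith
      _ = ε := by ring
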